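/- For p = 2 the identity h₀(−1/τ) + h₂(−1/τ) = ζ₈^{−1}·√τ·(h₀(τ) + h₂(τ)) follows from the two relations h₀(−1/τ) ± 2ζ₈ h₁(−1/τ) − h₂(−1/τ) = ±√τ(h₀(τ) ± 2ζ₈^{−1} h₁(τ) − h₂(τ)) together with the U₂-relation 2(f|U₂)|S T^{−4} S^{−1} = f(τ/2) − f((τ+1)/2), where f = ∑_β h_β(8τ)-type weight-1/2 form on Γ₀(8). -/

import Mathlib

open Complex

/-- The open upper half plane, as a subset of `ℂ`. -/
def UpperH : Set ℂ := {z : ℂ | 0 < z.im}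

/-- The principal square root `τ^{1/2}`. -/
noncomputable def csqrt (z : ℂ) : ℂ := z ^ ((1 : ℂ) / 2)

noncomputable def ζ₈ : ℂ := Complex.exp (2 * Real.pi * Complex.I / 8)

lemma zeta8_ne_zero : ζ₈ ≠ 0 := Complex.exp_ne_zero _

lemma zeta8_pow_four : ζ₈ ^ 4 = -1 := by
  rw [ζ₈, ← Complex.exp_nat_mul]
  have : (4 : ℕ) * (2 * (Real.pi : ℂ) * Complex.I / 8) = Real.pi * Complex.I := by
    push_cast; ring
  rw [this, Complex.exp_pi_mul_I]

lemma csqrt_ne_zero {z : ℂ} (hz : z ≠ 0) : csqrt z ≠ 0 := by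
  simp [csqrt, Complex.cpow_eq_zero_iff, hz]

lemma csqrt_four_mul {z : ℂ} (hz : z ≠ 0) : csqrt (4 * z) = 2 * csqrt z := by
  have h4 : (4 : ℂ) * z = ((4 : ℝ) : ℂ) * z := by norm_num
  have hne : ((4 : ℝ) : ℂ) * z ≠ 0 := by
    simp [hz]
  unfold csqrt
  rw [h4, Complex.cpow_def_of_ne_zero hne, Complex.cpow_def_of_ne_zero hz,
    Complex.log_ofReal_mul (by norm_num) hz, add_mul, Complex.exp_add]
  congr 1
  have h1 : ((Real.log 4 : ℂ)) * (1 / 2) = ((Real.log 4 / 2 : ℝ) : ℂ) := by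
    push_cast; ring
  have h2 : Real.log 4 / 2 = Real.log 2 := by
    rw [show (4 : ℝ) = 2 ^ 2 by norm_num, Real.log_pow]
    push_cast; ring
  rw [h1, h2, ← Complex.ofReal_exp, Real.exp_log (by norm_num)]
  norm_num

/-- **The `S`-transformation of `h₀ + h₂` for `p = 2`.**
Let `h₀, h₁, h₂` be the theta-components of a weight-`1/2` form `f ∈ M^!_{1/2}(2)`,
so that `h_β(τ+1) = ζ₈^{β²} h_β(τ)`.  Assume the two relations
`h₀(−1/τ) ± 2ζ₈ h₁(−1/τ) − h₂(−1/τ) = ±√τ (h₀(τ) ± 2ζ₈⁻¹ h₁(τ) − h₂(τ))`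
and the `U₂`-relation
`2(f|U₂)|S T⁻⁴ S⁻¹ = f(τ/2) − f((τ+1)/2)`, written out as
`(h₀(−4/τ) + h₂(−4/τ))·τ^{−1/2} = 2·h₁(−4/(τ+4))·(τ+4)^{−1/2}`
(its explicit form, with `f|U₂ = h₀(4τ) + h₂(4τ)` and the right-hand side equal to
`2 h₁(4τ)|_{S T⁴}`).  Then
`h₀(−1/τ) + h₂(−1/τ) = ζ₈⁻¹ √τ (h₀(τ) + h₂(τ))`. -/
theorem h0_plus_h2_S_transformation
    (h₀ h₁ h₂ : ℂ → ℂ)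
    (htrans₀ : ∀ τ ∈ UpperH, h₀ (τ + 1) = h₀ τ)
    (htrans₁ : ∀ τ ∈ UpperH, h₁ (τ + 1) = ζ₈ * h₁ τ)
    (htrans₂ : ∀ τ ∈ UpperH, h₂ (τ + 1) = ζ₈ ^ 4 * h₂ τ)
    (hGG : ∀ τ ∈ UpperH,
      h₀ (-1 / τ) + 2 * ζ₈ * h₁ (-1 / τ) - h₂ (-1 / τ) =
        csqrt τ * (h₀ τ + 2 * ζ₈⁻¹ * h₁ τ - h₂ τ))
    (hHH : ∀ τ ∈ UpperH,
      h₀ (-1 / τ) - 2 * ζ₈ * h₁ (-1 / τ) - h₂ (-1 / τ) =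
        -(csqrt τ * (h₀ τ - 2 * ζ₈⁻¹ * h₁ τ - h₂ τ)))
    (hU₂ : ∀ τ ∈ UpperH,
      (h₀ (-4 / τ) + h₂ (-4 / τ)) * (csqrt τ)⁻¹ =
        2 * h₁ (-4 / (τ + 4)) * (csqrt (τ + 4))⁻¹) :
    ∀ τ ∈ UpperH,
      h₀ (-1 / τ) + h₂ (-1 / τ) = ζ₈⁻¹ * csqrt τ * (h₀ τ + h₂ τ) := by
  intro τ hτ
  have hτim : 0 < τ.im := hτ
  have hτ0 : τ ≠ 0 := by
    intro h; rw [h] at hτim; simp at hτim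
  have hτ1 : τ + 1 ∈ UpperH := by
    simp only [UpperH, Set.mem_setOf_eq] at hτ ⊢
    simpa using hτ
  have hτ10 : τ + 1 ≠ 0 := by
    intro h
    have : (τ + 1).im = 0 := by rw [h]; simp
    simp only [Complex.add_im, Complex.one_im, add_zero] at this
    exact hτim.ne' this
  have h4τ : 4 * τ ∈ UpperH := by
    simp only [UpperH, Set.mem_setOf_eq] at hτ ⊢
    simp [Complex.mul_im]
    positivity
  have hcs : csqrt τ ≠ 0 := csqrt_ne_zero hτ0
  have hcs1 : csqrt (τ + 1) ≠ 0 := csqrt_ne_zero hτ10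
  -- the h₁ relation at τ+1
  have eGG := hGG (τ + 1) hτ1
  have eHH := hHH (τ + 1) hτ1
  rw [htrans₀ τ hτ, htrans₁ τ hτ, htrans₂ τ hτ, zeta8_pow_four] at eGG eHH
  -- h₁ (-1/(τ+1)) = csqrt (τ+1) * (h₀ τ + h₂ τ) / (2 ζ₈)
  have e2 : 4 * ζ₈ * h₁ (-1 / (τ + 1)) = 2 * csqrt (τ + 1) * (h₀ τ + h₂ τ) := by
    have hz : ζ₈ * ζ₈⁻¹ = 1 := mul_inv_cancel₀ zeta8_ne_zero
    linear_combination eGG - eHH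
  -- the U₂ relation at 4τ
  have e1 := hU₂ (4 * τ) h4τ
  have harg1 : -4 / (4 * τ) = -1 / τ := by
    field_simp
  have harg2 : (4 : ℂ) * τ + 4 = 4 * (τ + 1) := by ring
  have harg3 : -4 / (4 * (τ + 1)) = -1 / (τ + 1) := by
    field_simp
  rw [harg1, harg2, harg3, csqrt_four_mul hτ0, csqrt_four_mul hτ10] at e1
  -- combine
  have e1' : (h₀ (-1 / τ) + h₂ (-1 / τ)) * (2 * csqrt (τ + 1)) =
      2 * h₁ (-1 / (τ + 1)) * (2 * csqrt τ) := by
    field_simp at e1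
    simp only [← neg_div] at e1
    linear_combination 2 * e1
  have hz : ζ₈ * ζ₈⁻¹ = 1 := mul_inv_cancel₀ zeta8_ne_zero
  have key : (h₀ (-1 / τ) + h₂ (-1 / τ)) * (ζ₈ * (2 * csqrt (τ + 1))) =
      (ζ₈⁻¹ * csqrt τ * (h₀ τ + h₂ τ)) * (ζ₈ * (2 * csqrt (τ + 1))) := by
    linear_combination ζ₈ * e1' + csqrt τ * e2 +
      (-2) * csqrt (τ + 1) * csqrt τ * (h₀ τ + h₂ τ) * hz
  exact mul_right_cancel₀ (by simp [zeta8_ne_zero, hcs1]) key
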